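/- Let A be a unital C*-algebra, let U ∈ A be a unitary element (U*U = UU* = 1), let F ∈ A, and let δ ≥ 0 satisfy ‖F − U‖ ≤ δ. Let s > 0 be a real number satisfying 5/s − 20/s³ + 16/s⁵ = 1, and suppose δ ≤ 1. Then ‖(5/s)·F − (20/s³)·F·F*·F + (16/s⁵)·F·F*·F·F*·F − U‖ ≤ δ + (20/s³)·(1 + δ)·δ·(2 + δ) + (16/s⁵)·(1 + δ)·δ·(2 + δ)·(2 + 2δ + δ²). -/

import Mathlib

/-- Error bound for two rounds of oblivious amplitude amplification (Lemma A.2):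
`V₂ = (5/s)F − (20/s³)FF*F + (16/s⁵)FF*FF*F` approximates the unitary `U`
term by term, where `s` satisfies `5/s − 20/s³ + 16/s⁵ = 1`. -/
theorem oaa_two_rounds_error_bound
    {A : Type*} [NormedRing A] [StarRing A] [CStarRing A]
    [CompleteSpace A] [Nontrivial A] [NormedAlgebra ℝ A]
    (U : A) (hU : U ∈ unitary A) (F : A) (δ : ℝ) (hδ0 : 0 ≤ δ) (hδ1 : δ ≤ 1)
    (s : ℝ) (hs : 0 < s) (hs1 : 5 / s - 20 / s ^ 3 + 16 / s ^ 5 = 1)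
    (h : ‖F - U‖ ≤ δ) :
    ‖(5 / s) • F - (20 / s ^ 3) • (F * star F * F)
        + (16 / s ^ 5) • (F * star F * F * star F * F) - U‖
      ≤ δ + (20 / s ^ 3) * ((1 + δ) * δ * (2 + δ))
        + (16 / s ^ 5) * ((1 + δ) * δ * (2 + δ) * (2 + 2 * δ + δ ^ 2)) := by
  have hUnorm : ‖U‖ = 1 := CStarRing.norm_of_mem_unitary hU
  have hUU : star U * U = 1 := hU.1
  have hF : ‖F‖ ≤ 1 + δ := by
    calc ‖F‖ = ‖(F - U) + U‖ := by rw [sub_add_cancel]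
    _ ≤ ‖F - U‖ + ‖U‖ := norm_add_le _ _
    _ ≤ δ + 1 := by rw [hUnorm]; linarith
    _ = 1 + δ := by ring
  have hsF : ‖star F‖ ≤ 1 + δ := by rwa [norm_star]
  -- bound on ‖star F * F - 1‖
  have hE : ‖star F * F - 1‖ ≤ δ * (2 + δ) := by
    have hid : star F * F - 1 = star F * (F - U) + (star F - star U) * U := by
      rw [← hUU]; noncomm_ring
    calc ‖star F * F - 1‖ ≤ ‖star F * (F - U)‖ + ‖(star F - star U) * U‖ := by
          rw [hid]; exact norm_add_le _ _
    _ ≤ ‖star F‖ * ‖F - U‖ + ‖star F - star U‖ * ‖U‖ :=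
          add_le_add (norm_mul_le _ _) (norm_mul_le _ _)
    _ ≤ (1 + δ) * δ + δ * 1 := by
          have h2 : ‖star F - star U‖ = ‖F - U‖ := by rw [← star_sub, norm_star]
          rw [hUnorm, h2]
          exact add_le_add (mul_le_mul hsF h (norm_nonneg _) (by linarith)) (by linarith)
    _ = δ * (2 + δ) := by ring
  have hE2 : ‖star F * F + 1‖ ≤ 2 + 2 * δ + δ ^ 2 := by
    calc ‖star F * F + 1‖ ≤ ‖star F * F‖ + ‖(1 : A)‖ := norm_add_le _ _
    _ ≤ ‖star F‖ * ‖F‖ + 1 := by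
          have : ‖(1 : A)‖ = 1 := CStarRing.norm_one
          rw [this]; exact add_le_add_left (norm_mul_le _ _) 1
    _ ≤ (1 + δ) * (1 + δ) + 1 := by
          have h0 : (0:ℝ) ≤ ‖F‖ := norm_nonneg _
          exact add_le_add_left
            (mul_le_mul hsF hF h0 (by linarith)) 1
    _ = 2 + 2 * δ + δ ^ 2 := by ring
  -- algebraic decomposition
  have h5 : (5:ℝ) / s = 1 + 20 / s ^ 3 - 16 / s ^ 5 := by linarith
  have key : (5 / s) • F - (20 / s ^ 3) • (F * star F * F)
        + (16 / s ^ 5) • (F * star F * F * star F * F) - U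
      = (F - U) + (-(20 / s ^ 3)) • (F * (star F * F - 1))
        + (16 / s ^ 5) • (F * ((star F * F - 1) * (star F * F + 1))) := by
    rw [h5]
    simp only [mul_sub, sub_mul, mul_add, add_mul, mul_one, one_mul, mul_assoc]
    module
  rw [key]
  have b1 : ‖F * (star F * F - 1)‖ ≤ (1 + δ) * (δ * (2 + δ)) :=
    le_trans (norm_mul_le _ _)
      (mul_le_mul hF hE (norm_nonneg _) (by linarith))
  have b2 : ‖F * ((star F * F - 1) * (star F * F + 1))‖
      ≤ (1 + δ) * (δ * (2 + δ) * (2 + 2 * δ + δ ^ 2)) := by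
    calc ‖F * ((star F * F - 1) * (star F * F + 1))‖
        ≤ ‖F‖ * (‖star F * F - 1‖ * ‖star F * F + 1‖) :=
          le_trans (norm_mul_le _ _)
            (mul_le_mul_of_nonneg_left (norm_mul_le _ _) (norm_nonneg _))
    _ ≤ (1 + δ) * (δ * (2 + δ) * (2 + 2 * δ + δ ^ 2)) := by
          apply mul_le_mul hF _ (by positivity) (by linarith)
          exact mul_le_mul hE hE2 (norm_nonneg _) (by positivity)
  have hc1 : (0:ℝ) ≤ 20 / s ^ 3 := by positivity
  have hc2 : (0:ℝ) ≤ 16 / s ^ 5 := by positivity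
  calc ‖(F - U) + (-(20 / s ^ 3)) • (F * (star F * F - 1))
        + (16 / s ^ 5) • (F * ((star F * F - 1) * (star F * F + 1)))‖
      ≤ ‖F - U‖ + ‖(-(20 / s ^ 3)) • (F * (star F * F - 1))‖
        + ‖(16 / s ^ 5) • (F * ((star F * F - 1) * (star F * F + 1)))‖ :=
        norm_add₃_le
  _ ≤ δ + (20 / s ^ 3) * ((1 + δ) * (δ * (2 + δ)))
        + (16 / s ^ 5) * ((1 + δ) * (δ * (2 + δ) * (2 + 2 * δ + δ ^ 2))) := by
        rw [norm_smul, norm_smul, Real.norm_eq_abs, Real.norm_eq_abs,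
          abs_neg, abs_of_nonneg hc1, abs_of_nonneg hc2]
        exact add_le_add (add_le_add h (mul_le_mul_of_nonneg_left b1 hc1))
          (mul_le_mul_of_nonneg_left b2 hc2)
  _ = δ + (20 / s ^ 3) * ((1 + δ) * δ * (2 + δ))
        + (16 / s ^ 5) * ((1 + δ) * δ * (2 + δ) * (2 + 2 * δ + δ ^ 2)) := by ring
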